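/- arXiv:2309.11596 — 2 statements merged into one kernel-verified Lean document; each statement's English description precedes it below -/
import Mathlib

section
/- The set of matrices P ∈ Mat_{4×4}(ℝ) that are symmetric, idempotent (P² = P), of trace 2, and have diagonal entries (1, 1/3, 1/3, 1/3) consists of exactly four elements, namely the block-diagonal matrices P = Diag(1) ⊕ (1/3)·v vᵀ, where v ∈ ℝ³ runs over the four vectors (1, ε₂, ε₃) with ε₂, ε₃ ∈ {+1, −1}. In particular this level set of the Schur–Horn map is a finite four-point set and is not connected. -/
/-- The Schur–Horn level set over `(1, 1/3, 1/3, 1/3)` in `Gr_2(ℝ⁴)`. -/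
def level8 : Set (Matrix (Fin 4) (Fin 4) ℝ) :=
  {P | P.IsSymm ∧ P * P = P ∧ P.trace = 2 ∧ ∀ i, P i i = ![1, 1/3, 1/3, 1/3] i}

/-- The block-diagonal matrix `Diag(1) ⊕ (1/3)·v vᵀ` with `v = (1, ε₂, ε₃)`. -/
noncomputable def proj8 (ε₂ ε₃ : ℝ) : Matrix (Fin 4) (Fin 4) ℝ :=
  Matrix.of fun i j =>
    if i = 0 ∧ j = 0 then 1
    else if i = 0 ∨ j = 0 then 0
    else (1/3) * (![0, 1, ε₂, ε₃] i) * (![0, 1, ε₂, ε₃] j)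

theorem proj8_eq (ε₂ ε₃ : ℝ) :
    proj8 ε₂ ε₃ = !![1, 0, 0, 0;
                     0, 1/3, ε₂/3, ε₃/3;
                     0, ε₂/3, ε₂*ε₂/3, ε₂*ε₃/3;
                     0, ε₃/3, ε₂*ε₃/3, ε₃*ε₃/3] := by
  ext i j
  fin_cases i <;> fin_cases j <;>
    simp [proj8] <;> ring

set_option maxHeartbeats 2000000 in
theorem proj8_mem (ε₂ ε₃ : ℝ) (h2 : ε₂ = 1 ∨ ε₂ = -1) (h3 : ε₃ = 1 ∨ ε₃ = -1) :
    proj8 ε₂ ε₃ ∈ level8 := by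
  rcases h2 with rfl | rfl <;> rcases h3 with rfl | rfl <;>
    refine ⟨Matrix.IsSymm.ext fun i j => ?_, ?_, ?_, fun i => ?_⟩
  case' inl.inl.refine_2 | inl.inr.refine_2 | inr.inl.refine_2 | inr.inr.refine_2 =>
    ext i j; rw [Matrix.mul_apply, Fin.sum_univ_four]
  all_goals try fin_cases i
  all_goals try fin_cases j
  all_goals simp [proj8_eq, Matrix.trace, Matrix.diag, Fin.sum_univ_four,
    Matrix.vecHead, Matrix.vecTail] <;> norm_num

set_option maxHeartbeats 1000000 in
theorem level8_fwd (P : Matrix (Fin 4) (Fin 4) ℝ) (hP : P ∈ level8) :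
    ∃ ε₂ ε₃ : ℝ, (ε₂ = 1 ∨ ε₂ = -1) ∧ (ε₃ = 1 ∨ ε₃ = -1) ∧ P = proj8 ε₂ ε₃ := by
  obtain ⟨hs, hP2, -, hd⟩ := hP
  have sym : ∀ i j, P j i = P i j := fun i j => hs.apply i j
  have key : ∀ i j : Fin 4,
      P i 0 * P 0 j + P i 1 * P 1 j + P i 2 * P 2 j + P i 3 * P 3 j = P i j := by
    intro i j
    have := congrFun (congrFun hP2 i) j
    rw [Matrix.mul_apply, Fin.sum_univ_four] at this
    exact this
  have d0 : P 0 0 = 1 := by simpa using hd 0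
  have d1 : P 1 1 = 1/3 := by simpa using hd 1
  have d2 : P 2 2 = 1/3 := by simpa using hd 2
  have d3 : P 3 3 = 1/3 := by simpa using hd 3
  -- row 0 vanishes off the diagonal
  have e0 : P 0 1 * P 0 1 + P 0 2 * P 0 2 + P 0 3 * P 0 3 = 0 := by
    have h := key 0 0
    rw [sym 0 1, sym 0 2, sym 0 3, d0] at h
    linarith
  have z1 : P 0 1 = 0 := by
    have : P 0 1 * P 0 1 = 0 := by
      nlinarith [mul_self_nonneg (P 0 2), mul_self_nonneg (P 0 3), mul_self_nonneg (P 0 1)]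
    exact mul_self_eq_zero.mp this
  have z2 : P 0 2 = 0 := by
    have : P 0 2 * P 0 2 = 0 := by
      nlinarith [mul_self_nonneg (P 0 2), mul_self_nonneg (P 0 3), mul_self_nonneg (P 0 1)]
    exact mul_self_eq_zero.mp this
  have z3 : P 0 3 = 0 := by
    have : P 0 3 * P 0 3 = 0 := by
      nlinarith [mul_self_nonneg (P 0 2), mul_self_nonneg (P 0 3), mul_self_nonneg (P 0 1)]
    exact mul_self_eq_zero.mp this
  have z1' : P 1 0 = 0 := (sym 0 1).trans z1
  have z2' : P 2 0 = 0 := (sym 0 2).trans z2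
  have z3' : P 3 0 = 0 := (sym 0 3).trans z3
  have s12 : P 2 1 = P 1 2 := sym 1 2
  have s13 : P 3 1 = P 1 3 := sym 1 3
  have s23 : P 3 2 = P 2 3 := sym 2 3
  -- equations among a = P 1 2, b = P 1 3, c = P 2 3
  have k11 := key 1 1
  have k22 := key 2 2
  have k33 := key 3 3
  have k12 := key 1 2
  have k13 := key 1 3
  have k23 := key 2 3
  rw [z1', z1, d1, s12, s13] at k11
  rw [z2', z2, s12, d2, s23] at k22
  rw [z3', z3, s13, s23, d3] at k33
  rw [z1', d1, d2, s23] at k12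
  rw [z1', d1, d3] at k13
  rw [z2', s12, d2, d3] at k23
  have ha2 : P 1 2 * P 1 2 = 1/9 := by nlinarith [k11, k22, k33]
  have hb2 : P 1 3 * P 1 3 = 1/9 := by nlinarith [k11, k22, k33]
  have hab : P 1 2 * P 1 3 = P 2 3 / 3 := by linarith [k23]
  refine ⟨3 * P 1 2, 3 * P 1 3, ?_, ?_, ?_⟩
  · have h : (3 * P 1 2 - 1) * (3 * P 1 2 + 1) = 0 := by linear_combination 9 * ha2
    rcases mul_eq_zero.mp h with h | h
    · left; linarith
    · right; linarith
  · have h : (3 * P 1 3 - 1) * (3 * P 1 3 + 1) = 0 := by linear_combination 9 * hb2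
    rcases mul_eq_zero.mp h with h | h
    · left; linarith
    · right; linarith
  · rw [proj8_eq]
    ext i j
    fin_cases i <;> fin_cases j <;> simp [Matrix.vecHead, Matrix.vecTail]
    all_goals first
      | ring1
      | exact d0 | exact d1 | exact z1 | exact z2 | exact z3
      | exact z1' | exact z2' | exact z3'
      | linarith [d1, d2, d3]
      | linear_combination s12
      | linear_combination s13
      | linear_combination d2 - 3 * ha2
      | linear_combination d3 - 3 * hb2
      | linear_combination -3 * hab
      | linear_combination s23 - 3 * hab

theorem proj8_inj {a b c d : ℝ} (h : proj8 a b = proj8 c d) : a = c ∧ b = d := by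
  rw [proj8_eq, proj8_eq] at h
  constructor
  · have h2 := congrFun (congrFun h 1) 2
    simp at h2
    linarith
  · have h3 := congrFun (congrFun h 1) 3
    simp at h3
    linarith

theorem level8_eq_quad :
    level8 = {P | ∃ ε₂ ε₃ : ℝ, (ε₂ = 1 ∨ ε₂ = -1) ∧ (ε₃ = 1 ∨ ε₃ = -1) ∧
        P = proj8 ε₂ ε₃} := by
  ext P
  constructor
  · exact level8_fwd P
  · rintro ⟨ε₂, ε₃, h2, h3, rfl⟩
    exact proj8_mem ε₂ ε₃ h2 h3

theorem level8_explicit :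
    level8 = {proj8 1 1, proj8 1 (-1), proj8 (-1) 1, proj8 (-1) (-1)} := by
  rw [level8_eq_quad]
  ext P
  constructor
  · rintro ⟨ε₂, ε₃, (rfl | rfl), (rfl | rfl), rfl⟩ <;> simp [Set.mem_insert_iff]
  · rintro (rfl | rfl | rfl | rfl)
    · exact ⟨1, 1, Or.inl rfl, Or.inl rfl, rfl⟩
    · exact ⟨1, -1, Or.inl rfl, Or.inr rfl, rfl⟩
    · exact ⟨-1, 1, Or.inr rfl, Or.inl rfl, rfl⟩
    · exact ⟨-1, -1, Or.inr rfl, Or.inr rfl, rfl⟩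

theorem level8_ncard : level8.ncard = 4 := by
  rw [level8_explicit]
  have h1 : proj8 (1:ℝ) 1 ∉ ({proj8 1 (-1), proj8 (-1) 1, proj8 (-1) (-1)} :
      Set (Matrix (Fin 4) (Fin 4) ℝ)) := by
    rintro (h | h | h) <;> obtain ⟨ha, hb⟩ := proj8_inj h <;> linarith
  have h2 : proj8 (1:ℝ) (-1) ∉ ({proj8 (-1) 1, proj8 (-1) (-1)} :
      Set (Matrix (Fin 4) (Fin 4) ℝ)) := by
    rintro (h | h) <;> obtain ⟨ha, hb⟩ := proj8_inj h <;> linarith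
  have h3 : proj8 (-1:ℝ) 1 ≠ proj8 (-1) (-1) := by
    intro h; obtain ⟨ha, hb⟩ := proj8_inj h; norm_num at hb
  rw [Set.ncard_insert_of_notMem h1 (Set.toFinite _),
    Set.ncard_insert_of_notMem h2 (Set.toFinite _), Set.ncard_pair h3]

theorem level8_not_connected : ¬ IsConnected level8 := by
  rintro ⟨-, hpre⟩
  have hu : IsOpen {P : Matrix (Fin 4) (Fin 4) ℝ | 0 < P 1 2} :=
    isOpen_lt continuous_const (continuous_id.matrix_elem 1 2)
  have hv : IsOpen {P : Matrix (Fin 4) (Fin 4) ℝ | P 1 2 < 0} :=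
    isOpen_lt (continuous_id.matrix_elem 1 2) continuous_const
  have hval : ∀ ε₂ ε₃ : ℝ, proj8 ε₂ ε₃ 1 2 = ε₂ / 3 := by
    intro ε₂ ε₃; rw [proj8_eq]; simp
  have hcov : level8 ⊆ {P | 0 < P 1 2} ∪ {P | P 1 2 < 0} := by
    rw [level8_explicit]
    rintro P (rfl | rfl | rfl | rfl) <;> simp only [Set.mem_union, Set.mem_setOf_eq, hval] <;>
      norm_num
  have hmem1 : proj8 (1:ℝ) 1 ∈ level8 := proj8_mem 1 1 (Or.inl rfl) (Or.inl rfl)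
  have hmem2 : proj8 (-1:ℝ) 1 ∈ level8 := proj8_mem (-1) 1 (Or.inr rfl) (Or.inl rfl)
  have hne1 : (level8 ∩ {P | 0 < P 1 2}).Nonempty :=
    ⟨proj8 1 1, hmem1, by simp only [Set.mem_setOf_eq, hval]; norm_num⟩
  have hne2 : (level8 ∩ {P | P 1 2 < 0}).Nonempty :=
    ⟨proj8 (-1) 1, hmem2, by simp only [Set.mem_setOf_eq, hval]; norm_num⟩
  obtain ⟨P, -, hP1, hP2⟩ := hpre _ _ hu hv hcov hne1 hne2
  have h1 : (0:ℝ) < P 1 2 := hP1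
  have h2 : P 1 2 < 0 := hP2
  linarith

/-- The set of symmetric idempotent `4 × 4` real matrices of trace `2` with
diagonal `(1, 1/3, 1/3, 1/3)` consists of exactly the four block-diagonal
matrices `Diag(1) ⊕ (1/3)·v vᵀ`, `v = (1, ±1, ±1)`; it has exactly four
elements and is not connected. -/
theorem level_one_third_four_points :
    (level8 = {P | ∃ ε₂ ε₃ : ℝ, (ε₂ = 1 ∨ ε₂ = -1) ∧ (ε₃ = 1 ∨ ε₃ = -1) ∧
        P = proj8 ε₂ ε₃})
    ∧ level8.ncard = 4
    ∧ ¬ IsConnected level8 :=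
  ⟨level8_eq_quad, level8_ncard, level8_not_connected⟩
end

section
/- A matrix F ∈ Mat_{2×4}(ℝ) belongs to F^{(1,1,0,0)}_{4,2} (i.e. F Fᵀ = I_2, its first two columns have squared norm 1 and its last two columns have squared norm 0) if and only if F = [ A | 0 ], where A ∈ O(2) is the 2×2 block formed by the first two columns and 0 is the 2×2 zero block. Consequently F^{(1,1,0,0)}_{4,2} is homeomorphic to the orthogonal group O(2) and, in particular, is not connected. -/
def frames (n k : ℕ) (d : Fin n → ℝ) : Set (Matrix (Fin k) (Fin n) ℝ) :=
  {F | F * F.transpose = 1 ∧ ∀ j, ∑ i, (F i j) ^ 2 = d j}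

def blk (F : Matrix (Fin 2) (Fin 4) ℝ) : Matrix (Fin 2) (Fin 2) ℝ :=
  Matrix.of fun a b : Fin 2 => F a (Fin.castLE (by decide) b)

@[simp] lemma castLE_zero' (h : 2 ≤ 4) : Fin.castLE h (0 : Fin 2) = (0 : Fin 4) := rfl
@[simp] lemma castLE_one' (h : 2 ≤ 4) : Fin.castLE h (1 : Fin 2) = (1 : Fin 4) := rfl

lemma sq_add_sq_zero {x y : ℝ} (h : x ^ 2 + y ^ 2 = 0) : x = 0 ∧ y = 0 := by
  have hx : x ^ 2 = 0 := le_antisymm (by nlinarith [sq_nonneg y]) (sq_nonneg x)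
  have hy : y ^ 2 = 0 := le_antisymm (by nlinarith [sq_nonneg x]) (sq_nonneg y)
  exact ⟨pow_eq_zero_iff two_ne_zero |>.mp hx, pow_eq_zero_iff two_ne_zero |>.mp hy⟩

lemma key (F : Matrix (Fin 2) (Fin 4) ℝ) :
    F ∈ frames 4 2 ![1, 1, 0, 0] ↔
      (blk F * (blk F).transpose = 1 ∧ ∀ a : Fin 2, F a 2 = 0 ∧ F a 3 = 0) := by
  constructor
  · rintro ⟨h1, h2⟩
    have hz2 := h2 2
    have hz3 := h2 3
    simp [Fin.sum_univ_two] at hz2 hz3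
    obtain ⟨h02, h12⟩ := sq_add_sq_zero hz2
    obtain ⟨h03, h13⟩ := sq_add_sq_zero hz3
    refine ⟨?_, ?_⟩
    · ext a b
      have := congrFun (congrFun h1 a) b
      simp [Matrix.mul_apply, Fin.sum_univ_four, Fin.sum_univ_two, blk] at this ⊢
      fin_cases a <;> fin_cases b <;>
        simp_all [Fin.sum_univ_two, Matrix.one_apply]
    · intro a
      fin_cases a <;> exact ⟨by assumption, by assumption⟩
  · rintro ⟨hA, hz⟩
    have hz2 : ∀ a : Fin 2, F a 2 = 0 := fun a => (hz a).1
    have hz3 : ∀ a : Fin 2, F a 3 = 0 := fun a => (hz a).2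
    have hAtA : (blk F).transpose * blk F = 1 := mul_eq_one_comm.mp hA
    constructor
    · ext a b
      have := congrFun (congrFun hA a) b
      simp [Matrix.mul_apply, Fin.sum_univ_two, blk] at this
      simp [Matrix.mul_apply, Fin.sum_univ_four, hz2, hz3, this]
    · intro j
      fin_cases j
      · have := congrFun (congrFun hAtA 0) 0
        simp [Matrix.mul_apply, Fin.sum_univ_two, blk, Matrix.one_apply] at this
        simp [Fin.sum_univ_two, pow_two]
        linarith [this]
      · have := congrFun (congrFun hAtA 1) 1
        simp [Matrix.mul_apply, Fin.sum_univ_two, blk, Matrix.one_apply] at this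
        simp [Fin.sum_univ_two, pow_two]
        linarith [this]
      · simp [Fin.sum_univ_two, hz2]
      · simp [Fin.sum_univ_two, hz3]

def ofO2fun (A : Matrix (Fin 2) (Fin 2) ℝ) : Matrix (Fin 2) (Fin 4) ℝ :=
  Matrix.of fun a (b : Fin 4) => if h : (b : ℕ) < 2 then A a ⟨b, h⟩ else 0

lemma ofO2_c2 (A : Matrix (Fin 2) (Fin 2) ℝ) (a : Fin 2) : ofO2fun A a 2 = 0 := by
  simp only [ofO2fun, Matrix.of_apply]
  rw [dif_neg (by decide)]

lemma ofO2_c3 (A : Matrix (Fin 2) (Fin 2) ℝ) (a : Fin 2) : ofO2fun A a 3 = 0 := by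
  simp only [ofO2fun, Matrix.of_apply]
  rw [dif_neg (by decide)]

lemma blk_ofO2 (A : Matrix (Fin 2) (Fin 2) ℝ) : blk (ofO2fun A) = A := by
  ext a b
  fin_cases b <;> rfl

lemma ofO2_mem {A : Matrix (Fin 2) (Fin 2) ℝ} (hA : A * A.transpose = 1) :
    ofO2fun A ∈ frames 4 2 ![1, 1, 0, 0] := by
  rw [key]
  exact ⟨by rw [blk_ofO2]; exact hA, fun a => ⟨ofO2_c2 A a, ofO2_c3 A a⟩⟩

def theEquiv : (frames 4 2 ![1, 1, 0, 0]) ≃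
    ({A : Matrix (Fin 2) (Fin 2) ℝ | A * A.transpose = 1} : Set _) where
  toFun := fun F => ⟨blk F.1, ((key F.1).mp F.2).1⟩
  invFun := fun A => ⟨ofO2fun A.1, ofO2_mem A.2⟩
  left_inv := by
    rintro ⟨F, hF⟩
    obtain ⟨hA, hz⟩ := (key F).mp hF
    ext a b
    simp only [ofO2fun, Matrix.of_apply]
    split_ifs with h
    · rfl
    · have hb : b = 2 ∨ b = 3 := by omega
      rcases hb with hb | hb <;> rw [hb]
      · exact ((hz a).1).symm
      · exact ((hz a).2).symm
  right_inv := by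
    rintro ⟨A, hA⟩
    exact Subtype.ext (blk_ofO2 A)

noncomputable def theHomeo : (frames 4 2 ![1, 1, 0, 0]) ≃ₜ
    ({A : Matrix (Fin 2) (Fin 2) ℝ | A * A.transpose = 1} : Set _) where
  toEquiv := theEquiv
  continuous_toFun := by
    apply Continuous.subtype_mk
    apply continuous_matrix
    intro i j
    simp only [blk, Matrix.of_apply]
    exact continuous_subtype_val.matrix_elem i _
  continuous_invFun := by
    apply Continuous.subtype_mk
    apply continuous_matrix
    intro i j
    by_cases h : (j : ℕ) < 2
    · simp only [ofO2fun, Matrix.of_apply, dif_pos h]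
      exact continuous_subtype_val.matrix_elem i _
    · simp only [ofO2fun, Matrix.of_apply, dif_neg h]
      exact continuous_const

lemma det_sq (F : Matrix (Fin 2) (Fin 4) ℝ) (hF : F ∈ frames 4 2 ![1, 1, 0, 0]) :
    (blk F).det * (blk F).det = 1 := by
  have hA := ((key F).mp hF).1
  have := congrArg Matrix.det hA
  rwa [Matrix.det_mul, Matrix.det_transpose, Matrix.det_one] at this

def F₁ : Matrix (Fin 2) (Fin 4) ℝ := !![1, 0, 0, 0; 0, 1, 0, 0]
def F₂ : Matrix (Fin 2) (Fin 4) ℝ := !![0, 1, 0, 0; 1, 0, 0, 0]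

lemma F₁_mem : F₁ ∈ frames 4 2 ![1, 1, 0, 0] := by
  rw [key]
  constructor
  · ext a b
    fin_cases a <;> fin_cases b <;>
      simp [blk, F₁, Matrix.mul_apply, Fin.sum_univ_two, Matrix.one_apply]
  · intro a; fin_cases a <;> exact ⟨rfl, rfl⟩

lemma F₂_mem : F₂ ∈ frames 4 2 ![1, 1, 0, 0] := by
  rw [key]
  constructor
  · ext a b
    fin_cases a <;> fin_cases b <;>
      simp [blk, F₂, Matrix.mul_apply, Fin.sum_univ_two, Matrix.one_apply]
  · intro a; fin_cases a <;> exact ⟨rfl, rfl⟩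

lemma not_connected : ¬ IsConnected (frames 4 2 ![1, 1, 0, 0]) := by
  intro hC
  have hf : Continuous fun F : Matrix (Fin 2) (Fin 4) ℝ => (blk F).det := by
    have : (fun F : Matrix (Fin 2) (Fin 4) ℝ => (blk F).det) =
        fun F => F 0 0 * F 1 1 - F 0 1 * F 1 0 := by
      funext F
      rw [Matrix.det_fin_two]
      rfl
    rw [this]
    fun_prop
  have h1 : (blk F₁).det = 1 := by norm_num [blk, F₁, Matrix.det_fin_two]
  have h2 : (blk F₂).det = -1 := by norm_num [blk, F₂, Matrix.det_fin_two]
  have hiv := hC.isPreconnected.intermediate_value (a := F₂) (b := F₁) F₂_mem F₁_mem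
    hf.continuousOn
  rw [h1, h2] at hiv
  obtain ⟨F, hF, hF0⟩ := hiv (by norm_num : (0 : ℝ) ∈ Set.Icc (-1 : ℝ) 1)
  have hF0' : (blk F).det = 0 := hF0
  have := det_sq F hF
  rw [hF0'] at this
  norm_num at this

/-- A matrix `F ∈ Mat_{2×4}(ℝ)` belongs to `F^{(1,1,0,0)}_{4,2}` if and only
if `F = [ A | 0 ]` with `A ∈ O(2)` the block of the first two columns and the
last two columns zero.  Consequently `F^{(1,1,0,0)}_{4,2}` is homeomorphic to
the orthogonal group `O(2)` and, in particular, is not connected. -/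
theorem frames_1100_is_O2 :
    (∀ F : Matrix (Fin 2) (Fin 4) ℝ,
      F ∈ frames 4 2 ![1, 1, 0, 0] ↔
        ((Matrix.of fun a b : Fin 2 => F a (Fin.castLE (by omega) b)) *
            (Matrix.of fun a b : Fin 2 => F a (Fin.castLE (by omega) b)).transpose = 1
          ∧ ∀ a : Fin 2, F a 2 = 0 ∧ F a 3 = 0))
    ∧ Nonempty ((frames 4 2 ![1, 1, 0, 0]) ≃ₜ
        ({A : Matrix (Fin 2) (Fin 2) ℝ | A * A.transpose = 1} : Set _))
    ∧ ¬ IsConnected (frames 4 2 ![1, 1, 0, 0]) := by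
  exact ⟨fun F => key F, ⟨theHomeo⟩, not_connected⟩
end
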